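/- Let X = ((ω₁+1) × (ω+1)) \ {(ω₁,ω)} and 𝓑 = {B_{α,n} : α < ω₁, n < ω} with B_{α,n} = {(x,y) ∈ X : α ≤ x, n ≤ y}. Then (X, 𝓑) is spherically complete: every nonempty chain in 𝓑 under inclusion has nonempty intersection. -/

import Mathlib

open Ordinal

/-- The set `X = ((ω₁+1) × (ω+1)) \ {(ω₁, ω)}`. -/
def Xset : Set (Ordinal × Ordinal) :=
  {p | p.1 ≤ ω₁ ∧ p.2 ≤ ω ∧ p ≠ (ω₁, ω)}

/-- The ball `B_{α,n} = {(x,y) ∈ X : α ≤ x, n ≤ y}`. -/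
def Ball (a n : Ordinal) : Set (Ordinal × Ordinal) :=
  {p ∈ Xset | a ≤ p.1 ∧ n ≤ p.2}

/-- The family `𝓑 = {B_{α,n} : α < ω₁, n < ω}`. -/
def Bfam : Set (Set (Ordinal × Ordinal)) :=
  {s | ∃ a < ω₁, ∃ n < ω, s = Ball a n}

lemma mem_ball_self {a n : Ordinal} (ha : a < ω₁) (hn : n < ω) : (a, n) ∈ Ball a n :=
  ⟨⟨ha.le, hn.le, by simp [Prod.ext_iff, ha.ne]⟩, le_refl _, le_refl _⟩

lemma ball_subset_ball {a n a' n' : Ordinal} (ha : a < ω₁) (hn : n < ω)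
    (h : Ball a n ⊆ Ball a' n') : a' ≤ a ∧ n' ≤ n :=
  (h (mem_ball_self ha hn)).2

/-- The ball space `(X, 𝓑)` is spherically complete. -/
theorem Bfam_sphericallyComplete :
    ∀ C ⊆ Bfam, C.Nonempty → IsChain (· ⊆ ·) C → (⋂₀ C).Nonempty := by
  intro C hC _hne hchain
  by_cases hb : ∃ b < ω₁, ∀ a n, a < ω₁ → n < ω → Ball a n ∈ C → a ≤ b
  · -- bounded first indices: (b, ω) is in every ball
    obtain ⟨b, hbω, hub⟩ := hb
    refine ⟨(b, ω), ?_⟩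
    intro s hs
    obtain ⟨a, ha, n, hn, rfl⟩ := hC hs
    exact ⟨⟨hbω.le, le_refl _, by simp [Prod.ext_iff, hbω.ne]⟩,
      hub a n ha hn hs, hn.le⟩
  · -- unbounded first indices
    push_neg at hb
    -- claim the second indices are bounded
    have hm : ∃ m : Ordinal, m < ω ∧ ∀ a n, a < ω₁ → n < ω → Ball a n ∈ C → n ≤ m := by
      by_contra hm
      push_neg at hm
      have hm' : ∀ k : ℕ, ∃ a n, a < ω₁ ∧ n < ω ∧ Ball a n ∈ C ∧ (k : Ordinal) < n := by
        intro k
        obtain ⟨a, n, ha, hn, hmem, hkn⟩ := hm k (nat_lt_omega0 k)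
        exact ⟨a, n, ha, hn, hmem, hkn⟩
      choose af nf haf hnf hmemf hltf using hm'
      set b : Ordinal := ⨆ k, af k with hbdef
      have hblt : b < ω₁ := by
        exact Ordinal.iSup_lt_omega_one haf
      obtain ⟨a, n, ha, hn, hmem, hab⟩ := hb b hblt
      obtain ⟨k, rfl⟩ := Ordinal.lt_omega0.mp hn
      -- compare Ball a k with Ball (af k) (nf k)
      have hne : Ball a k ≠ Ball (af k) (nf k) := by
        intro h
        have := (ball_subset_ball ha hn h.subset).2
        exact absurd this (not_le.mpr (hltf k))
      rcases hchain hmem (hmemf k) hne with h | h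
      · exact absurd (ball_subset_ball ha hn h).2 (not_le.mpr (hltf k))
      · have := (ball_subset_ball (haf k) (hnf k) h).1
        exact absurd (this.trans (Ordinal.le_iSup af k)) (not_le.mpr hab)
    obtain ⟨m, hmω, hub⟩ := hm
    refine ⟨(ω₁, m), ?_⟩
    intro s hs
    obtain ⟨a, ha, n, hn, rfl⟩ := hC hs
    exact ⟨⟨le_refl _, hmω.le, by simp [Prod.ext_iff, hmω.ne]⟩,
      ha.le, hub a n ha hn hs⟩
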